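/- Let x0 < −√3/4 and let h(x) = ((x − x0)^2 + (4/9) g(x)^4)^{1/2} with g(x) = (9x(2x0 − x)/4)^{1/3}, for x ∈ [2x0, 0], and let x_+ = x0 + (x0^2 − 3/16)^{1/2}. Then there exists a unique point x̄ ∈ (x0, x_+) such that h is convex on [2x0, 2x0 − x̄] and on [x̄, 0], and concave on [2x0 − x̄, x̄]. (In particular h is even about the line x = x0, i.e. h(2x0 − x) = h(x) for all x ∈ [2x0, 0].) -/

import Mathlib

open Set

noncomputable def kk : ℝ := (4/3) * (9/4 : ℝ) ^ ((1:ℝ)/3)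
noncomputable def vv (x0 x : ℝ) : ℝ := (x * (2*x0 - x)) ^ ((1:ℝ)/3)

lemma vv_pos {x0 x : ℝ} (hW : 0 < x * (2*x0 - x)) : 0 < vv x0 x :=
  Real.rpow_pos_of_pos hW _

lemma hasDerivAt_W (x0 x : ℝ) : HasDerivAt (fun y => y * (2*x0 - y)) (2*x0 - 2*x) x := by
  have h := (hasDerivAt_id x).mul ((hasDerivAt_const x (2*x0)).sub (hasDerivAt_id x))
  refine h.congr_deriv ?_; simp; ring

lemma hasDerivAt_vv {x0 x : ℝ} (hW : 0 < x * (2*x0 - x)) :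
    HasDerivAt (vv x0) (-(2/3)*(x - x0)/(vv x0 x)^2) x := by
  have h := (Real.hasDerivAt_rpow_const (p := (1:ℝ)/3) (Or.inl hW.ne')).comp x (hasDerivAt_W x0 x)
  refine h.congr_deriv ?_
  have h1 : (x * (2*x0 - x)) ^ ((1:ℝ)/3 - 1) = ((vv x0 x)^2)⁻¹ := by
    have : ((1:ℝ)/3 - 1) = -(2/3) := by norm_num
    rw [this, Real.rpow_neg hW.le]
    congr 1
    rw [vv, ← Real.rpow_natCast ((x * (2*x0 - x)) ^ ((1:ℝ)/3)) 2, ← Real.rpow_mul hW.le]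
    norm_num
  rw [h1]
  have hv := vv_pos hW
  field_simp
  ring

noncomputable def FF (x0 x : ℝ) : ℝ := (x - x0)^2 + (3*kk/4) * (vv x0 x)^4
noncomputable def HH (x0 x : ℝ) : ℝ := Real.sqrt (FF x0 x)
noncomputable def F1 (x0 x : ℝ) : ℝ := 2*(x - x0)*(1 - kk * vv x0 x)
noncomputable def H1 (x0 x : ℝ) : ℝ := F1 x0 x / (2 * Real.sqrt (FF x0 x))
noncomputable def F2 (x0 x : ℝ) : ℝ :=
  2*(1 - kk * vv x0 x) + (4*kk/3)*(x - x0)^2/(vv x0 x)^2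
noncomputable def H2 (x0 x : ℝ) : ℝ :=
  (2 * FF x0 x * F2 x0 x - (F1 x0 x)^2) / (4 * FF x0 x * Real.sqrt (FF x0 x))

lemma kk_pos : 0 < kk := by
  have : (0:ℝ) < (9/4 : ℝ) ^ ((1:ℝ)/3) := Real.rpow_pos_of_pos (by norm_num) _
  unfold kk; positivity

lemma FF_pos {x0 x : ℝ} (hW : 0 < x * (2*x0 - x)) : 0 < FF x0 x := by
  have hv := vv_pos (x0 := x0) hW
  have hk := kk_pos
  unfold FF
  nlinarith [sq_nonneg (x - x0), pow_pos hv 4]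

lemma hasDerivAt_FF {x0 x : ℝ} (hW : 0 < x * (2*x0 - x)) :
    HasDerivAt (FF x0) (F1 x0 x) x := by
  have hv := (vv_pos (x0 := x0) hW).ne'
  have h1 : HasDerivAt (fun y => (y - x0)^2) (2*(x - x0)) x := by
    have := ((hasDerivAt_id x).sub_const x0).pow 2
    refine this.congr_deriv ?_; simp
  have h2 := ((hasDerivAt_vv hW).pow 4).const_mul (3*kk/4)
  have h := h1.add h2
  refine h.congr_deriv ?_
  unfold F1
  field_simp
  ring

lemma hasDerivAt_HH {x0 x : ℝ} (hW : 0 < x * (2*x0 - x)) :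
    HasDerivAt (HH x0) (H1 x0 x) x := by
  have hF := FF_pos (x0 := x0) hW
  have h := (Real.hasDerivAt_sqrt hF.ne').comp x (hasDerivAt_FF hW)
  refine h.congr_deriv ?_
  unfold H1
  field_simp

lemma hasDerivAt_F1 {x0 x : ℝ} (hW : 0 < x * (2*x0 - x)) :
    HasDerivAt (F1 x0) (F2 x0 x) x := by
  have hv := (vv_pos (x0 := x0) hW).ne'
  have h1 : HasDerivAt (fun y => 2*(y - x0)) 2 x := by
    have := ((hasDerivAt_id x).sub_const x0).const_mul 2
    refine this.congr_deriv ?_; ring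
  have h2 : HasDerivAt (fun y => 1 - kk * vv x0 y) (-(kk * (-(2/3)*(x - x0)/(vv x0 x)^2))) x := by
    have := ((hasDerivAt_vv hW).const_mul kk).const_sub 1
    convert this using 1
  have h := h1.mul h2
  refine h.congr_deriv ?_
  unfold F2
  field_simp
  ring

lemma hasDerivAt_H1 {x0 x : ℝ} (hW : 0 < x * (2*x0 - x)) :
    HasDerivAt (H1 x0) (H2 x0 x) x := by
  have hF := FF_pos (x0 := x0) hW
  have hs : 0 < Real.sqrt (FF x0 x) := Real.sqrt_pos.mpr hF
  have hden : HasDerivAt (fun y => 2 * Real.sqrt (FF x0 y)) (2 * (1 / (2 * Real.sqrt (FF x0 x)) * F1 x0 x)) x := by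
    exact (((Real.hasDerivAt_sqrt hF.ne').comp x (hasDerivAt_FF hW)).const_mul 2)
  have h := (hasDerivAt_F1 hW).div hden (by positivity)
  refine h.congr_deriv ?_
  unfold H2
  have hsq : Real.sqrt (FF x0 x) ^ 2 = FF x0 x := Real.sq_sqrt hF.le
  set s := Real.sqrt (FF x0 x) with hsdef
  rw [← hsq]
  field_simp
  ring

noncomputable def RR (x0 t : ℝ) : ℝ :=
  (2/3)*x0^4 - (1/3)*x0^2*t^3 - (kk*x0^2/2)*t^4 + (5/12)*t^6 - (kk/4)*t^7

lemma vv_nonneg' {x0 x : ℝ} (hW : 0 ≤ x * (2*x0 - x)) : 0 ≤ vv x0 x :=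
  Real.rpow_nonneg hW _

lemma vv_cube {x0 x : ℝ} (hW : 0 ≤ x * (2*x0 - x)) : (vv x0 x)^3 = x * (2*x0 - x) := by
  rw [vv, ← Real.rpow_natCast ((x * (2*x0 - x)) ^ ((1:ℝ)/3)) 3, ← Real.rpow_mul hW]
  norm_num

lemma key_identity {x0 x : ℝ} (hW : 0 < x * (2*x0 - x)) :
    (vv x0 x)^2 * (2 * FF x0 x * F2 x0 x - (F1 x0 x)^2) = 4 * kk * RR x0 (vv x0 x) := by
  have hv := vv_pos (x0 := x0) hW
  have hu2 : (x - x0)^2 = x0^2 - (vv x0 x)^3 := by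
    have h := vv_cube (x0 := x0) hW.le
    linear_combination h
  set v := vv x0 x with hvdef
  have step1 : (v:ℝ)^2 * (2 * FF x0 x * F2 x0 x - (F1 x0 x)^2) =
      4 * kk * ((2/3)*(x - x0)^4 + (x - x0)^2*v^3 + (3/4)*v^6
        - (kk/2)*(x - x0)^2*v^4 - (3*kk/4)*v^7) := by
    unfold FF F2 F1
    simp only [← hvdef]
    field_simp
    ring
  rw [step1, RR]
  linear_combination (4*kk) * (((2:ℝ)/3)*((x - x0)^2 + x0^2 - v^3) + v^3 - (kk/2)*v^4) * hu2

lemma kk_cube : kk^3 = 16/3 := by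
  have h : ((9/4 : ℝ) ^ ((1:ℝ)/3))^3 = 9/4 := by
    rw [← Real.rpow_natCast ((9/4 : ℝ) ^ ((1:ℝ)/3)) 3, ← Real.rpow_mul (by norm_num)]
    norm_num
  unfold kk; nlinarith [h]

lemma hasDerivAt_RR (x0 t : ℝ) :
    HasDerivAt (RR x0) (-x0^2*t^2 - 2*kk*x0^2*t^3 + (5/2)*t^5 - (7*kk/4)*t^6) t := by
  have h3 := hasDerivAt_pow 3 t
  have h4 := hasDerivAt_pow 4 t
  have h6 := hasDerivAt_pow 6 t
  have h7 := hasDerivAt_pow 7 t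
  have h := ((((hasDerivAt_const t ((2:ℝ)/3*x0^4)).sub (h3.const_mul ((1:ℝ)/3*x0^2))).sub
      (h4.const_mul (kk*x0^2/2))).add (h6.const_mul ((5:ℝ)/12))).sub (h7.const_mul (kk/4))
  refine h.congr_deriv ?_
  push_cast
  norm_num
  ring

lemma RR_strictAntiOn {x0 b : ℝ} (hb : 0 < b) (hb3 : b^3 = x0^2) (hkb : 1 < kk * b) :
    StrictAntiOn (RR x0) (Icc 0 b) := by
  apply strictAntiOn_of_deriv_neg (convex_Icc 0 b)
  · apply Continuous.continuousOn
    have : Continuous (fun t : ℝ => (2/3)*x0^4 - (1/3)*x0^2*t^3 - (kk*x0^2/2)*t^4 + (5/12)*t^6 - (kk/4)*t^7) := by fun_prop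
    exact this
  · intro t ht
    rw [interior_Icc] at ht
    obtain ⟨ht0, htb⟩ := ht
    rw [(hasDerivAt_RR x0 t).deriv, ← hb3]
    have hk := kk_pos
    have h1 : 0 < (kk*b - 1) * (b^2 * t^3) := by
      apply mul_pos (by linarith) (by positivity)
    have h2 : 0 ≤ (b - t) * (b + t) * t^3 := by
      apply mul_nonneg (mul_nonneg (by linarith) (by linarith)) (by positivity)
    have h3 : 0 < b^2 * t^2 * (2*b - t) := by
      apply mul_pos (by positivity) (by linarith)
    have h4 : 0 ≤ kk * t^6 := by positivity
    nlinarith [h1, h2, h3, h4]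

lemma RR_at_b {x0 b : ℝ} (hb : 0 < b) (hb3 : b^3 = x0^2) (hkb : 1 < kk * b) :
    RR x0 b < 0 := by
  have h : RR x0 b = (3/4)*b^6*(1 - kk*b) := by
    unfold RR
    linear_combination ((2:ℝ)/3*(x0^2 + b^3) - (1/3)*b^3 - (kk/2)*b^4) * hb3.symm
  rw [h]
  have : (0:ℝ) < (3/4)*b^6 := by positivity
  nlinarith

lemma RR_at_invk {x0 : ℝ} (ha : 3/16 < x0^2) : 0 < RR x0 (1/kk) := by
  have hk := kk_pos
  have hkt : kk * (1/kk) = 1 := by field_simp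
  have ht3 : (1/kk)^3 = 3/16 := by
    rw [div_pow, kk_cube]; norm_num
  have h : RR x0 (1/kk) = (2/3)*(x0^2 - 3/16)*(x0^2 - 3/64) := by
    unfold RR
    linear_combination (-(x0^2/2)*(1/kk)^3 - (1/kk)^6/4) * hkt +
      (-(5/6)*x0^2 + (1/6)*((1/kk)^3 + 3/16)) * ht3
  rw [h]
  have h1 : (0:ℝ) < x0^2 - 3/16 := by linarith
  have h2 : (0:ℝ) < x0^2 - 3/64 := by linarith
  positivity

lemma H2_sign_aux {x0 x : ℝ} (hW : 0 < x * (2*x0 - x)) :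
    0 < RR x0 (vv x0 x) → 0 < H2 x0 x := by
  intro hR
  have hv := vv_pos (x0 := x0) hW
  have hF := FF_pos (x0 := x0) hW
  have hk := kk_pos
  have hid := key_identity (x0 := x0) hW
  have hD : 0 < 2 * FF x0 x * F2 x0 x - (F1 x0 x)^2 := by
    nlinarith [pow_pos hv 2, mul_pos (mul_pos (by norm_num : (0:ℝ) < 4) hk) hR]
  unfold H2
  have hs : 0 < Real.sqrt (FF x0 x) := Real.sqrt_pos.mpr hF
  positivity

lemma H2_nonneg {x0 x : ℝ} (hW : 0 < x * (2*x0 - x)) :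
    0 ≤ RR x0 (vv x0 x) → 0 ≤ H2 x0 x := by
  intro hR
  have hv := vv_pos (x0 := x0) hW
  have hF := FF_pos (x0 := x0) hW
  have hk := kk_pos
  have hid := key_identity (x0 := x0) hW
  have hD : 0 ≤ 2 * FF x0 x * F2 x0 x - (F1 x0 x)^2 := by
    nlinarith [pow_pos hv 2, mul_nonneg (mul_nonneg (by norm_num : (0:ℝ) ≤ 4) hk.le) hR]
  unfold H2
  have hs : 0 < Real.sqrt (FF x0 x) := Real.sqrt_pos.mpr hF
  positivity

lemma H2_nonpos {x0 x : ℝ} (hW : 0 < x * (2*x0 - x)) :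
    RR x0 (vv x0 x) ≤ 0 → H2 x0 x ≤ 0 := by
  intro hR
  have hv := vv_pos (x0 := x0) hW
  have hF := FF_pos (x0 := x0) hW
  have hk := kk_pos
  have hid := key_identity (x0 := x0) hW
  have hD : 2 * FF x0 x * F2 x0 x - (F1 x0 x)^2 ≤ 0 := by
    nlinarith [pow_pos hv 2, mul_nonneg (mul_nonneg (by norm_num : (0:ℝ) ≤ 4) hk.le) (neg_nonneg.mpr hR)]
  unfold H2
  have hs : 0 < Real.sqrt (FF x0 x) := Real.sqrt_pos.mpr hF
  exact div_nonpos_of_nonpos_of_nonneg hD (by positivity)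

lemma H2_sign_aux_neg {x0 x : ℝ} (hW : 0 < x * (2*x0 - x)) :
    RR x0 (vv x0 x) < 0 → H2 x0 x < 0 := by
  intro hR
  have hv := vv_pos (x0 := x0) hW
  have hF := FF_pos (x0 := x0) hW
  have hk := kk_pos
  have hid := key_identity (x0 := x0) hW
  have hD : 2 * FF x0 x * F2 x0 x - (F1 x0 x)^2 < 0 := by
    nlinarith [pow_pos hv 2]
  unfold H2
  have hs : 0 < Real.sqrt (FF x0 x) := Real.sqrt_pos.mpr hF
  apply div_neg_of_neg_of_pos hD (by positivity)

lemma isOpen_W (x0 : ℝ) : IsOpen {y : ℝ | 0 < y * (2*x0 - y)} :=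
  isOpen_lt continuous_const (by fun_prop)

lemma deriv_HH_eq {x0 x : ℝ} (hW : 0 < x * (2*x0 - x)) :
    deriv (HH x0) x = H1 x0 x := (hasDerivAt_HH hW).deriv

lemma deriv2_HH {x0 x : ℝ} (hW : 0 < x * (2*x0 - x)) :
    deriv (deriv (HH x0)) x = H2 x0 x := by
  have hev : deriv (HH x0) =ᶠ[nhds x] H1 x0 := by
    filter_upwards [(isOpen_W x0).mem_nhds hW] with y hy
    exact deriv_HH_eq hy
  rw [hev.deriv_eq]
  exact (hasDerivAt_H1 hW).deriv

lemma diff_deriv_HH {x0 x : ℝ} (hW : 0 < x * (2*x0 - x)) :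
    DifferentiableAt ℝ (deriv (HH x0)) x := by
  have hev : H1 x0 =ᶠ[nhds x] deriv (HH x0) := by
    filter_upwards [(isOpen_W x0).mem_nhds hW] with y hy
    exact (deriv_HH_eq hy).symm
  exact (hasDerivAt_H1 hW).differentiableAt.congr_of_eventuallyEq hev.symm

lemma continuous_HH (x0 : ℝ) : Continuous (HH x0) := by
  apply Real.continuous_sqrt.comp
  unfold FF
  apply Continuous.add (by fun_prop)
  apply Continuous.mul continuous_const
  apply Continuous.pow
  unfold vv
  apply Continuous.rpow_const (by fun_prop)
  intro x
  right; norm_num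

lemma convexOn_congr {s : Set ℝ} {f g : ℝ → ℝ} (hf : ConvexOn ℝ s f)
    (h : ∀ x ∈ s, f x = g x) : ConvexOn ℝ s g := by
  refine ⟨hf.1, fun x hx y hy a b ha hb hab => ?_⟩
  rw [← h _ hx, ← h _ hy, ← h _ (hf.1 hx hy ha hb hab)]
  exact hf.2 hx hy ha hb hab

lemma concaveOn_congr {s : Set ℝ} {f g : ℝ → ℝ} (hf : ConcaveOn ℝ s f)
    (h : ∀ x ∈ s, f x = g x) : ConcaveOn ℝ s g := by
  refine ⟨hf.1, fun x hx y hy a b ha hb hab => ?_⟩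
  rw [← h _ hx, ← h _ hy, ← h _ (hf.1 hx hy ha hb hab)]
  exact hf.2 hx hy ha hb hab

lemma strictConvexOn_congr {s : Set ℝ} {f g : ℝ → ℝ} (hf : StrictConvexOn ℝ s f)
    (h : ∀ x ∈ s, f x = g x) : StrictConvexOn ℝ s g := by
  refine ⟨hf.1, fun x hx y hy hxy a b ha hb hab => ?_⟩
  rw [← h _ hx, ← h _ hy, ← h _ (hf.1 hx hy ha.le hb.le hab)]
  exact hf.2 hx hy hxy ha hb hab

lemma strictConcaveOn_congr {s : Set ℝ} {f g : ℝ → ℝ} (hf : StrictConcaveOn ℝ s f)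
    (h : ∀ x ∈ s, f x = g x) : StrictConcaveOn ℝ s g := by
  refine ⟨hf.1, fun x hx y hy hxy a b ha hb hab => ?_⟩
  rw [← h _ hx, ← h _ hy, ← h _ (hf.1 hx hy ha.le hb.le hab)]
  exact hf.2 hx hy hxy ha hb hab

lemma convexOn_HH_of {x0 p q : ℝ} (hp : 2*x0 ≤ p) (hq : q ≤ 0)
    (hsign : ∀ x ∈ Ioo p q, 0 ≤ RR x0 (vv x0 x)) :
    ConvexOn ℝ (Icc p q) (HH x0) := by
  have hWmem : ∀ x ∈ Ioo p q, 0 < x * (2*x0 - x) := by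
    intro x hx
    nlinarith [hx.1, hx.2]
  apply convexOn_of_deriv2_nonneg (convex_Icc p q) ((continuous_HH x0).continuousOn)
  · rw [interior_Icc]
    intro x hx
    exact (hasDerivAt_HH (hWmem x hx)).differentiableAt.differentiableWithinAt
  · rw [interior_Icc]
    intro x hx
    exact (diff_deriv_HH (hWmem x hx)).differentiableWithinAt
  · rw [interior_Icc]
    intro x hx
    have hW := hWmem x hx
    show (0:ℝ) ≤ deriv (deriv (HH x0)) x
    rw [deriv2_HH hW]
    exact H2_nonneg hW (hsign x hx)

lemma concaveOn_HH_of {x0 p q : ℝ} (hp : 2*x0 ≤ p) (hq : q ≤ 0)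
    (hsign : ∀ x ∈ Ioo p q, RR x0 (vv x0 x) ≤ 0) :
    ConcaveOn ℝ (Icc p q) (HH x0) := by
  have hWmem : ∀ x ∈ Ioo p q, 0 < x * (2*x0 - x) := by
    intro x hx
    nlinarith [hx.1, hx.2]
  apply concaveOn_of_deriv2_nonpos (convex_Icc p q) ((continuous_HH x0).continuousOn)
  · rw [interior_Icc]
    intro x hx
    exact (hasDerivAt_HH (hWmem x hx)).differentiableAt.differentiableWithinAt
  · rw [interior_Icc]
    intro x hx
    exact (diff_deriv_HH (hWmem x hx)).differentiableWithinAt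
  · rw [interior_Icc]
    intro x hx
    have hW := hWmem x hx
    show deriv (deriv (HH x0)) x ≤ 0
    rw [deriv2_HH hW]
    exact H2_nonpos hW (hsign x hx)

lemma strictConvexOn_HH_of {x0 p q : ℝ} (hp : 2*x0 ≤ p) (hq : q ≤ 0)
    (hsign : ∀ x ∈ Ioo p q, 0 < RR x0 (vv x0 x)) :
    StrictConvexOn ℝ (Icc p q) (HH x0) := by
  have hWmem : ∀ x ∈ Ioo p q, 0 < x * (2*x0 - x) := by
    intro x hx
    nlinarith [hx.1, hx.2]
  apply strictConvexOn_of_deriv2_pos (convex_Icc p q) ((continuous_HH x0).continuousOn)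
  intro x hx
  rw [interior_Icc] at hx
  have hW := hWmem x hx
  show (0:ℝ) < deriv (deriv (HH x0)) x
  rw [deriv2_HH hW]
  exact H2_sign_aux hW (hsign x hx)

lemma strictConcaveOn_HH_of {x0 p q : ℝ} (hp : 2*x0 ≤ p) (hq : q ≤ 0)
    (hsign : ∀ x ∈ Ioo p q, RR x0 (vv x0 x) < 0) :
    StrictConcaveOn ℝ (Icc p q) (HH x0) := by
  have hWmem : ∀ x ∈ Ioo p q, 0 < x * (2*x0 - x) := by
    intro x hx
    nlinarith [hx.1, hx.2]
  apply strictConcaveOn_of_deriv2_neg (convex_Icc p q) ((continuous_HH x0).continuousOn)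
  intro x hx
  rw [interior_Icc] at hx
  have hW := hWmem x hx
  show deriv (deriv (HH x0)) x < 0
  rw [deriv2_HH hW]
  exact H2_sign_aux_neg hW (hsign x hx)

lemma h_eq_HH {x0 : ℝ} (g h : ℝ → ℝ)
    (hg : ∀ x : ℝ, g x = (9 * x * (2 * x0 - x) / 4) ^ ((1 : ℝ) / 3))
    (hh : ∀ x : ℝ, h x = ((x - x0) ^ 2 + (4 / 9) * (g x) ^ 4) ^ ((1 : ℝ) / 2))
    {x : ℝ} (hW : 0 ≤ x * (2*x0 - x)) : h x = HH x0 x := by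
  have hc : (0:ℝ) < (9/4 : ℝ) := by norm_num
  have hg4 : (4/9 : ℝ) * (g x)^4 = (3*kk/4) * (vv x0 x)^4 := by
    rw [hg]
    have hb : 9 * x * (2 * x0 - x) / 4 = (9/4) * (x * (2*x0 - x)) := by ring
    rw [hb]
    have h1 : ((9/4 : ℝ) * (x * (2*x0 - x))) ^ ((1:ℝ)/3) =
        (9/4 : ℝ) ^ ((1:ℝ)/3) * (x * (2*x0 - x)) ^ ((1:ℝ)/3) :=
      Real.mul_rpow hc.le hW
    rw [h1]
    rw [mul_pow]
    have h2 : ((9/4 : ℝ) ^ ((1:ℝ)/3))^4 = (9/4) * ((9/4 : ℝ) ^ ((1:ℝ)/3)) := by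
      have h3 : ((9/4 : ℝ) ^ ((1:ℝ)/3))^3 = 9/4 := by
        rw [← Real.rpow_natCast ((9/4 : ℝ) ^ ((1:ℝ)/3)) 3, ← Real.rpow_mul hc.le]
        norm_num
      linear_combination ((9/4 : ℝ) ^ ((1:ℝ)/3)) * h3
    rw [h2]
    unfold kk vv
    ring
  rw [hh, hg4, ← Real.sqrt_eq_rpow]
  rfl

lemma cube_root_cube {t : ℝ} (ht : 0 ≤ t) : (t^3) ^ ((1:ℝ)/3) = t := by
  rw [← Real.rpow_natCast t 3, ← Real.rpow_mul ht]
  norm_num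

set_option maxHeartbeats 1600000 in
/-- Lemma 4.5 ii, inflection: for `x0 < -√3/4` there is a
unique `x̄ ∈ (x0, x_+)` such that `h` is convex on `[2x0, 2x0 - x̄]` and on
`[x̄, 0]` and concave on `[2x0 - x̄, x̄]`; moreover `h` is even about `x = x0`. -/
theorem h_unique_inflection_large_x0
    (x0 : ℝ) (hx0 : x0 < -Real.sqrt 3 / 4)
    (g h : ℝ → ℝ)
    (hg : ∀ x : ℝ, g x = (9 * x * (2 * x0 - x) / 4) ^ ((1 : ℝ) / 3))
    (hh : ∀ x : ℝ, h x = ((x - x0) ^ 2 + (4 / 9) * (g x) ^ 4) ^ ((1 : ℝ) / 2))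
    (xp : ℝ) (hxp : xp = x0 + (x0 ^ 2 - 3 / 16) ^ ((1 : ℝ) / 2)) :
    (∀ x ∈ Icc (2 * x0) 0, h (2 * x0 - x) = h x) ∧
    (∃! xb : ℝ, xb ∈ Ioo x0 xp ∧
      ConvexOn ℝ (Icc (2 * x0) (2 * x0 - xb)) h ∧
      ConvexOn ℝ (Icc xb 0) h ∧
      ConcaveOn ℝ (Icc (2 * x0 - xb) xb) h) := by

  have hs3 : (0:ℝ) ≤ Real.sqrt 3 := Real.sqrt_nonneg 3
  have hs3sq : (Real.sqrt 3)^2 = 3 := Real.sq_sqrt (by norm_num)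
  have hx0neg : x0 < 0 := by nlinarith
  have ha : 3/16 < x0^2 := by nlinarith
  have hk := kk_pos
  -- symmetry
  have hsym : ∀ x ∈ Icc (2 * x0) 0, h (2 * x0 - x) = h x := by
    intro x _
    rw [hh, hh, hg, hg]
    rw [show 9 * (2*x0 - x) * (2 * x0 - (2*x0 - x)) / 4 = 9 * x * (2 * x0 - x) / 4 by ring]
    rw [show (2*x0 - x - x0)^2 = (x - x0)^2 by ring]
  refine ⟨hsym, ?_⟩
  -- setup of the root
  obtain ⟨b, hbdef⟩ : ∃ r : ℝ, r = (x0^2) ^ ((1:ℝ)/3) := ⟨_, rfl⟩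
  have hbpos : 0 < b := hbdef ▸ Real.rpow_pos_of_pos (by positivity) _
  have hb3 : b^3 = x0^2 := by
    rw [hbdef, ← Real.rpow_natCast ((x0^2) ^ ((1:ℝ)/3)) 3, ← Real.rpow_mul (by positivity)]
    norm_num
  have hkb : 1 < kk * b := by
    have h1 : (1:ℝ)^3 < (kk * b)^3 := by
      have : (kk*b)^3 = kk^3 * b^3 := by ring
      rw [this, kk_cube, hb3]
      nlinarith
    exact lt_of_pow_lt_pow_left₀ 3 (by positivity) h1
  have hinvk : 1/kk < b := by
    rw [div_lt_iff₀ hk]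
    linarith [mul_comm kk b]
  have hRb : RR x0 b < 0 := RR_at_b hbpos hb3 hkb
  have hRk : 0 < RR x0 (1/kk) := RR_at_invk ha
  have hanti := RR_strictAntiOn hbpos hb3 hkb
  have hcont : Continuous (RR x0) := by unfold RR; fun_prop
  obtain ⟨vb, hvbmem, hvbeq⟩ :=
    intermediate_value_Ioo' hinvk.le hcont.continuousOn (⟨hRb, hRk⟩ : (0:ℝ) ∈ Ioo (RR x0 b) (RR x0 (1/kk)))
  have hvb1 : 1/kk < vb := hvbmem.1
  have hvb2 : vb < b := hvbmem.2
  have hvbpos : 0 < vb := lt_trans (by positivity) hvb1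
  have hv3lt : vb^3 < x0^2 := by
    rw [← hb3]; exact pow_lt_pow_left₀ hvb2 hvbpos.le (by norm_num)
  have hinvk3 : (1/kk)^3 = 3/16 := by
    rw [div_pow, kk_cube]; norm_num
  have hv316 : 3/16 < vb^3 := by
    rw [← hinvk3]; exact pow_lt_pow_left₀ hvb1 (by positivity) (by norm_num)
  obtain ⟨ub, hubdef⟩ : ∃ r : ℝ, r = Real.sqrt (x0^2 - vb^3) := ⟨_, rfl⟩
  have hubpos : 0 < ub := hubdef ▸ Real.sqrt_pos.mpr (by linarith)
  have hub2 : ub^2 = x0^2 - vb^3 := by rw [hubdef]; exact Real.sq_sqrt (by linarith)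
  obtain ⟨xbar, hxbardef⟩ : ∃ r : ℝ, r = x0 + ub := ⟨_, rfl⟩
  have hxpval : xp = x0 + Real.sqrt (x0^2 - 3/16) := by
    rw [hxp, ← Real.sqrt_eq_rpow]
  have hub_lt : ub < Real.sqrt (x0^2 - 3/16) := by
    rw [hubdef]
    exact Real.sqrt_lt_sqrt (by linarith) (by linarith)
  have hxbar_mem : xbar ∈ Ioo x0 xp := by
    constructor
    · rw [hxbardef]; linarith
    · rw [hxbardef, hxpval]; linarith
  have hxp_neg : xp < 0 := by
    rw [hxpval]
    have h1 : Real.sqrt (x0^2 - 3/16) < Real.sqrt (x0^2) :=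
      Real.sqrt_lt_sqrt (by linarith) (by linarith)
    have h2 : Real.sqrt (x0^2) = -x0 := by
      rw [show x0^2 = (-x0)^2 by ring, Real.sqrt_sq (by linarith)]
    linarith
  have hxbar_neg : xbar < 0 := lt_trans hxbar_mem.2 hxp_neg
  have hxbar_gt : x0 < xbar := hxbar_mem.1
  have hWxbar : xbar * (2*x0 - xbar) = vb^3 := by
    rw [hxbardef]
    linear_combination -hub2
  have hvxbar : vv x0 xbar = vb := by
    rw [vv, hWxbar, cube_root_cube hvbpos.le]
  -- sign lemmas
  have hsign_in : ∀ x, 2*x0 - xbar < x → x < xbar → RR x0 (vv x0 x) < 0 := by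
    intro x h1 h2
    have hx2x0 : 2*x0 < x := by linarith
    have hx0' : x < 0 := lt_trans h2 hxbar_neg
    have hW : 0 < x * (2*x0 - x) :=
      mul_pos_of_neg_of_neg hx0' (by linarith)
    have hkey : x*(2*x0 - x) - vb^3 = (xbar - x)*(x + xbar - 2*x0) := by
      rw [← hWxbar]; ring
    have hWgt : vb^3 < x * (2*x0 - x) := by
      have hp : 0 < (xbar - x)*(x + xbar - 2*x0) :=
        mul_pos (by linarith) (by linarith)
      linarith
    have hvgt : vb < vv x0 x := by
      have := Real.rpow_lt_rpow (by positivity : (0:ℝ) ≤ vb^3) hWgt (by norm_num : (0:ℝ) < 1/3)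
      rwa [cube_root_cube hvbpos.le] at this
    have hvle_b : vv x0 x ≤ b := by
      rw [hbdef]
      exact Real.rpow_le_rpow hW.le (by linarith [sq_nonneg (x - x0),
        show x*(2*x0-x) = x0^2 - (x - x0)^2 from by ring]) (by norm_num)
    have := hanti ⟨hvbpos.le, hvb2.le⟩ ⟨vv_nonneg' hW.le, hvle_b⟩ hvgt
    rwa [hvbeq] at this
  have hsign_out : ∀ x, 2*x0 < x → x < 0 → (x < 2*x0 - xbar ∨ xbar < x) →
      0 < RR x0 (vv x0 x) := by
    intro x h1 h2 hcase
    have hW : 0 < x * (2*x0 - x) :=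
      mul_pos_of_neg_of_neg h2 (by linarith)
    have hkey : x*(2*x0 - x) - vb^3 = (xbar - x)*(x + xbar - 2*x0) := by
      rw [← hWxbar]; ring
    have hWlt : x * (2*x0 - x) < vb^3 := by
      rcases hcase with hc | hc
      · have hn : (xbar - x)*(x + xbar - 2*x0) < 0 :=
          mul_neg_of_pos_of_neg (by linarith) (by linarith)
        linarith
      · have hn : (xbar - x)*(x + xbar - 2*x0) < 0 :=
          mul_neg_of_neg_of_pos (by linarith) (by linarith)
        linarith
    have hvlt : vv x0 x < vb := by
      have := Real.rpow_lt_rpow hW.le hWlt (by norm_num : (0:ℝ) < 1/3)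
      rwa [cube_root_cube hvbpos.le] at this
    have hvle_b : vv x0 x ≤ b := by
      rw [hbdef]
      exact Real.rpow_le_rpow hW.le (by linarith [sq_nonneg (x - x0),
        show x*(2*x0-x) = x0^2 - (x - x0)^2 from by ring]) (by norm_num)
    have := hanti ⟨vv_nonneg' hW.le, hvle_b⟩ ⟨hvbpos.le, hvb2.le⟩ hvlt
    rwa [hvbeq] at this
  -- equality of h and HH on relevant intervals
  have heq : ∀ x, 2*x0 ≤ x → x ≤ 0 → h x = HH x0 x := by
    intro x h1 h2
    have hprod : 0 ≤ (-x) * (-(2*x0 - x)) := mul_nonneg (by linarith) (by linarith)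
    exact h_eq_HH g h hg hh (by linarith [hprod, show (-x) * (-(2*x0 - x)) = x * (2*x0 - x) from by ring])
  refine ⟨xbar, ⟨hxbar_mem, ?_, ?_, ?_⟩, ?_⟩
  · -- convex on [2x0, 2x0 - xbar]
    apply convexOn_congr (convexOn_HH_of (le_refl _) (by linarith)
      (fun x hx => (hsign_out x hx.1 (by linarith [hx.2]) (Or.inl hx.2)).le))
    intro x hx
    exact (heq x hx.1 (by linarith [hx.2])).symm
  · -- convex on [xbar, 0]
    apply convexOn_congr (convexOn_HH_of (by linarith) (le_refl _)
      (fun x hx => (hsign_out x (by linarith [hx.1]) hx.2 (Or.inr hx.1)).le))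
    intro x hx
    exact (heq x (by linarith [hx.1]) hx.2).symm
  · -- concave on [2x0 - xbar, xbar]
    apply concaveOn_congr (concaveOn_HH_of (by linarith) (by linarith)
      (fun x hx => (hsign_in x hx.1 hx.2).le))
    intro x hx
    exact (heq x (by linarith [hx.1]) (by linarith [hx.2])).symm
  · -- uniqueness
    rintro y ⟨hymem, hy1, hy2, hy3⟩
    have hy_gt : x0 < y := hymem.1
    have hy_neg : y < 0 := lt_trans hymem.2 hxp_neg
    rcases lt_trichotomy y xbar with hlt | heq' | hgt
    · exfalso
      have hstrict : StrictConcaveOn ℝ (Icc y xbar) h := by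
        apply strictConcaveOn_congr (strictConcaveOn_HH_of (by linarith) (by linarith)
          (fun x hx => hsign_in x (by linarith [hx.1]) hx.2))
        intro x hx
        exact (heq x (by linarith [hx.1]) (by linarith [hx.2])).symm
      have hc1 := hstrict.2 (⟨le_refl y, hlt.le⟩ : y ∈ Icc y xbar)
        (⟨hlt.le, le_refl xbar⟩ : xbar ∈ Icc y xbar) (ne_of_lt hlt)
        (by norm_num : (0:ℝ) < 1/2) (by norm_num : (0:ℝ) < 1/2) (by norm_num)
      have hc2 := hy2.2 (⟨le_refl y, hy_neg.le⟩ : y ∈ Icc y 0)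
        (⟨hlt.le, hxbar_neg.le⟩ : xbar ∈ Icc y 0)
        (by norm_num : (0:ℝ) ≤ 1/2) (by norm_num : (0:ℝ) ≤ 1/2) (by norm_num)
      simp only [smul_eq_mul] at hc1 hc2
      linarith
    · exact heq'
    · exfalso
      have hstrict : StrictConvexOn ℝ (Icc xbar y) h := by
        apply strictConvexOn_congr (strictConvexOn_HH_of (by linarith) (by linarith)
          (fun x hx => hsign_out x (by linarith [hx.1]) (by linarith [hx.2]) (Or.inr hx.1)))
        intro x hx
        exact (heq x (by linarith [hx.1]) (by linarith [hx.2])).symm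
      have hc1 := hstrict.2 (⟨le_refl xbar, hgt.le⟩ : xbar ∈ Icc xbar y)
        (⟨hgt.le, le_refl y⟩ : y ∈ Icc xbar y) (ne_of_lt hgt)
        (by norm_num : (0:ℝ) < 1/2) (by norm_num : (0:ℝ) < 1/2) (by norm_num)
      have hc2 := hy3.2 (⟨by linarith, hgt.le⟩ : xbar ∈ Icc (2*x0 - y) y)
        (⟨by linarith, le_refl y⟩ : y ∈ Icc (2*x0 - y) y)
        (by norm_num : (0:ℝ) ≤ 1/2) (by norm_num : (0:ℝ) ≤ 1/2) (by norm_num)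
      simp only [smul_eq_mul] at hc1 hc2
      linarith
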